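/- Let Σ be positive definite with largest and smallest eigenvalues λ_max, λ_min, let v ≠ 0, and let r > 0. The map u ↦ cos_Σ(u, v) is Lipschitz with constant λ_max^{1/2}/(r λ_min^{1/2}) on the set {u ∈ R^d : ‖u‖ ≥ r}, where ‖·‖ denotes the Euclidean norm. -/

import Mathlib

open Matrix

variable {d : ℕ}

noncomputable def matNorm (S : Matrix (Fin d) (Fin d) ℝ) (x : Fin d → ℝ) : ℝ :=
  Real.sqrt (x ⬝ᵥ S.mulVec x)

noncomputable def matCos (S : Matrix (Fin d) (Fin d) ℝ) (u v : Fin d → ℝ) : ℝ :=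
  (u ⬝ᵥ S.mulVec v) / (matNorm S u * matNorm S v)

noncomputable def enorm (x : Fin d → ℝ) : ℝ := Real.sqrt (x ⬝ᵥ x)

private lemma auxSymm (S : Matrix (Fin d) (Fin d) ℝ) (hS : S.IsHermitian)
    (x y : Fin d → ℝ) : x ⬝ᵥ S.mulVec y = y ⬝ᵥ S.mulVec x := by
  rw [Matrix.dotProduct_mulVec, ← Matrix.mulVec_transpose]
  have hT : Sᵀ = S := by simpa [Matrix.IsHermitian, Matrix.conjTranspose_eq_transpose_of_trivial] using hS
  rw [hT, dotProduct_comm]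

private lemma auxExpand (S : Matrix (Fin d) (Fin d) ℝ) (hS : S.IsHermitian)
    (s t : ℝ) (x y : Fin d → ℝ) :
    (s • x - t • y) ⬝ᵥ S.mulVec (s • x - t • y) =
      s^2 * (x ⬝ᵥ S.mulVec x) - 2*s*t*(x ⬝ᵥ S.mulVec y) + t^2 * (y ⬝ᵥ S.mulVec y) := by
  simp only [Matrix.mulVec_sub, Matrix.mulVec_smul, sub_dotProduct,
    smul_dotProduct, dotProduct_sub, dotProduct_smul, smul_eq_mul]
  rw [auxSymm S hS y x]; ring

private lemma auxNonneg (S : Matrix (Fin d) (Fin d) ℝ) (hS : S.PosDef)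
    (x : Fin d → ℝ) : 0 ≤ x ⬝ᵥ S.mulVec x := by
  have := hS.posSemidef.dotProduct_mulVec_nonneg x
  simpa using this

private lemma auxPos (S : Matrix (Fin d) (Fin d) ℝ) (hS : S.PosDef)
    {x : Fin d → ℝ} (hx : x ≠ 0) : 0 < x ⬝ᵥ S.mulVec x := by
  have := hS.dotProduct_mulVec_pos hx
  simpa using this

private lemma auxCS (S : Matrix (Fin d) (Fin d) ℝ) (hS : S.PosDef)
    (x y : Fin d → ℝ) :
    (x ⬝ᵥ S.mulVec y)^2 ≤ (x ⬝ᵥ S.mulVec x) * (y ⬝ᵥ S.mulVec y) := by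
  by_cases hy : y = 0
  · simp [hy]
  have hqy : 0 < y ⬝ᵥ S.mulVec y := auxPos S hS hy
  set t : ℝ := (x ⬝ᵥ S.mulVec y) / (y ⬝ᵥ S.mulVec y) with ht
  have key : 0 ≤ ((1:ℝ) • x - t • y) ⬝ᵥ S.mulVec ((1:ℝ) • x - t • y) := auxNonneg S hS _
  rw [auxExpand S hS.1 1 t x y] at key
  have htq : t * (y ⬝ᵥ S.mulVec y) = x ⬝ᵥ S.mulVec y := div_mul_cancel₀ _ hqy.ne'
  nlinarith [key, htq, hqy]

/-- For positive definite `Σ` with eigenvalue bounds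
`λ_min ‖x‖² ≤ ‖x‖_Σ² ≤ λ_max ‖x‖²` and `v ≠ 0`, the map `u ↦ cos_Σ(u, v)` is
`√λ_max/(r √λ_min)`-Lipschitz on `{u : ‖u‖ ≥ r}` (Euclidean norm), for `r > 0`. -/
theorem matCos_lipschitzOn (S : Matrix (Fin d) (Fin d) ℝ) (hS : S.PosDef)
    (lmax lmin : ℝ) (hlmin : 0 < lmin)
    (hmax : ∀ x : Fin d → ℝ, x ⬝ᵥ S.mulVec x ≤ lmax * (x ⬝ᵥ x))
    (hmin : ∀ x : Fin d → ℝ, lmin * (x ⬝ᵥ x) ≤ x ⬝ᵥ S.mulVec x)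
    (v : Fin d → ℝ) (hv : v ≠ 0) (r : ℝ) (hr : 0 < r) :
    ∀ u u' : Fin d → ℝ, r ≤ _root_.enorm u → r ≤ _root_.enorm u' →
      |matCos S u v - matCos S u' v| ≤
        Real.sqrt lmax / (r * Real.sqrt lmin) * _root_.enorm (u - u') := by
  intro u u' hu hu'
  have dnn : ∀ x : Fin d → ℝ, 0 ≤ x ⬝ᵥ x := fun x =>
    Finset.sum_nonneg fun i _ => mul_self_nonneg _
  have hru : r ^ 2 ≤ u ⬝ᵥ u := by
    have h := pow_le_pow_left₀ hr.le hu 2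
    rwa [show _root_.enorm u = Real.sqrt (u ⬝ᵥ u) from rfl, Real.sq_sqrt (dnn u)] at h
  have hru' : r ^ 2 ≤ u' ⬝ᵥ u' := by
    have h := pow_le_pow_left₀ hr.le hu' 2
    rwa [show _root_.enorm u' = Real.sqrt (u' ⬝ᵥ u') from rfl, Real.sq_sqrt (dnn u')] at h
  have hu0 : u ≠ 0 := by
    intro h; rw [h] at hru; simp [dotProduct] at hru; nlinarith
  have hu'0 : u' ≠ 0 := by
    intro h; rw [h] at hru'; simp [dotProduct] at hru'; nlinarith
  have hqu : 0 < u ⬝ᵥ S.mulVec u := auxPos S hS hu0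
  have hqu' : 0 < u' ⬝ᵥ S.mulVec u' := auxPos S hS hu'0
  have hqv : 0 < v ⬝ᵥ S.mulVec v := auxPos S hS hv
  have hvv : 0 < v ⬝ᵥ v :=
    lt_of_le_of_ne (dnn v) fun h => hv (dotProduct_self_eq_zero.mp h.symm)
  have hlmax : 0 < lmax := by have := hmax v; nlinarith
  set a := Real.sqrt (u ⬝ᵥ S.mulVec u) with hadef
  set b := Real.sqrt (u' ⬝ᵥ S.mulVec u') with hbdef
  set c := Real.sqrt (v ⬝ᵥ S.mulVec v) with hcdef
  have ha : 0 < a := Real.sqrt_pos.mpr hqu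
  have hb : 0 < b := Real.sqrt_pos.mpr hqu'
  have hc : 0 < c := Real.sqrt_pos.mpr hqv
  have ha2 : a ^ 2 = u ⬝ᵥ S.mulVec u := Real.sq_sqrt hqu.le
  have hb2 : b ^ 2 = u' ⬝ᵥ S.mulVec u' := Real.sq_sqrt hqu'.le
  have hc2 : c ^ 2 = v ⬝ᵥ S.mulVec v := Real.sq_sqrt hqv.le
  set w := b • u - a • u' with hw
  have hBw : w ⬝ᵥ S.mulVec v = b * (u ⬝ᵥ S.mulVec v) - a * (u' ⬝ᵥ S.mulVec v) := by
    simp [hw, sub_dotProduct, smul_dotProduct, smul_eq_mul]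
  have hdiff : matCos S u v - matCos S u' v = (w ⬝ᵥ S.mulVec v) / (a * b * c) := by
    simp only [matCos, matNorm, ← hadef, ← hbdef, ← hcdef]
    rw [hBw]
    field_simp
  have hqw : w ⬝ᵥ S.mulVec w ≤ a * b * ((u - u') ⬝ᵥ S.mulVec (u - u')) := by
    have e1 : w ⬝ᵥ S.mulVec w
        = b^2 * (u ⬝ᵥ S.mulVec u) - 2*b*a*(u ⬝ᵥ S.mulVec u')
          + a^2 * (u' ⬝ᵥ S.mulVec u') := auxExpand S hS.1 b a u u'
    have e2 : (u - u') ⬝ᵥ S.mulVec (u - u')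
        = (u ⬝ᵥ S.mulVec u) - 2*(u ⬝ᵥ S.mulVec u') + (u' ⬝ᵥ S.mulVec u') := by
      have h := auxExpand S hS.1 1 1 u u'
      simpa using h
    rw [e1, e2, ← ha2, ← hb2]
    nlinarith [mul_nonneg (mul_pos ha hb).le (sq_nonneg (a - b))]
  have hcs := auxCS S hS w v
  set e := _root_.enorm (u - u') with he
  have he2 : e ^ 2 = (u - u') ⬝ᵥ (u - u') := Real.sq_sqrt (dnn _)
  have he0 : 0 ≤ e := Real.sqrt_nonneg _
  have hq : (u - u') ⬝ᵥ S.mulVec (u - u') ≤ lmax * e ^ 2 := by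
    rw [he2]; exact hmax _
  have habnn : (0:ℝ) ≤ a * b := (mul_pos ha hb).le
  have key : |w ⬝ᵥ S.mulVec v| ≤ Real.sqrt (a*b) * (Real.sqrt lmax * e) * c := by
    have h1 : (w ⬝ᵥ S.mulVec v)^2 ≤ (Real.sqrt (a*b) * (Real.sqrt lmax * e) * c)^2 := by
      have hrhs : (Real.sqrt (a*b) * (Real.sqrt lmax * e) * c)^2
          = (a*b) * (lmax * e^2) * (v ⬝ᵥ S.mulVec v) := by
        rw [mul_pow, mul_pow, mul_pow, Real.sq_sqrt habnn, Real.sq_sqrt hlmax.le, hc2]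
      rw [hrhs]
      have hq' : w ⬝ᵥ S.mulVec w ≤ a * b * (lmax * e^2) := by
        calc w ⬝ᵥ S.mulVec w ≤ a * b * ((u - u') ⬝ᵥ S.mulVec (u - u')) := hqw
          _ ≤ a * b * (lmax * e^2) := mul_le_mul_of_nonneg_left hq habnn
      calc (w ⬝ᵥ S.mulVec v)^2 ≤ (w ⬝ᵥ S.mulVec w) * (v ⬝ᵥ S.mulVec v) := hcs
        _ ≤ a * b * (lmax * e^2) * (v ⬝ᵥ S.mulVec v) :=
            mul_le_mul_of_nonneg_right hq' hqv.le
    calc |w ⬝ᵥ S.mulVec v| = Real.sqrt ((w ⬝ᵥ S.mulVec v)^2) :=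
          (Real.sqrt_sq_eq_abs _).symm
      _ ≤ Real.sqrt ((Real.sqrt (a*b) * (Real.sqrt lmax * e) * c)^2) :=
          Real.sqrt_le_sqrt h1
      _ = Real.sqrt (a*b) * (Real.sqrt lmax * e) * c := Real.sqrt_sq (by positivity)
  have hsabpos : 0 < Real.sqrt (a*b) := Real.sqrt_pos.mpr (mul_pos ha hb)
  have hab : lmin * r^2 ≤ a * b := by
    have h1 : Real.sqrt (lmin * r^2) ≤ a := by
      apply Real.sqrt_le_sqrt
      calc lmin * r^2 ≤ lmin * (u ⬝ᵥ u) := mul_le_mul_of_nonneg_left hru hlmin.le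
        _ ≤ u ⬝ᵥ S.mulVec u := hmin u
    have h2 : Real.sqrt (lmin * r^2) ≤ b := by
      apply Real.sqrt_le_sqrt
      calc lmin * r^2 ≤ lmin * (u' ⬝ᵥ u') := mul_le_mul_of_nonneg_left hru' hlmin.le
        _ ≤ u' ⬝ᵥ S.mulVec u' := hmin u'
    calc lmin * r^2 = Real.sqrt (lmin * r^2) * Real.sqrt (lmin * r^2) :=
          (Real.mul_self_sqrt (by positivity)).symm
      _ ≤ a * b := mul_le_mul h1 h2 (Real.sqrt_nonneg _) ha.le
  have hsab_ge : r * Real.sqrt lmin ≤ Real.sqrt (a*b) := by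
    have h := Real.sqrt_le_sqrt hab
    rwa [Real.sqrt_mul hlmin.le, Real.sqrt_sq hr.le, mul_comm] at h
  have step1 : Real.sqrt (a*b) * (Real.sqrt lmax * e) * c / (a*b*c)
      = Real.sqrt lmax * e / Real.sqrt (a*b) := by
    have hsab : Real.sqrt (a*b) * Real.sqrt (a*b) = a*b := Real.mul_self_sqrt habnn
    rw [show a*b*c = Real.sqrt (a*b) * Real.sqrt (a*b) * c by rw [hsab]]
    field_simp
  rw [hdiff, abs_div, abs_of_pos (show (0:ℝ) < a*b*c by positivity)]
  calc |w ⬝ᵥ S.mulVec v| / (a*b*c)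
      ≤ Real.sqrt (a*b) * (Real.sqrt lmax * e) * c / (a*b*c) := by
        gcongr
    _ = Real.sqrt lmax * e / Real.sqrt (a*b) := step1
    _ ≤ Real.sqrt lmax * e / (r * Real.sqrt lmin) := by
        gcongr
    _ = Real.sqrt lmax / (r * Real.sqrt lmin) * e := by ring
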